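/- A biharmonic Einstein hypersurface of Euclidean space ℝ^{m+1} or of hyperbolic space H^{m+1} (m ≥ 3) is minimal. -/
import Mathlib


noncomputable section

open scoped RealInnerProductSpace BigOperators

/-- Abstract data encoding an isometrically immersed (connected, orientable) hypersurface
`M^m ↪ N^{m+1}`: `V` is a model for the tangent spaces of `M` (an `m`-dimensional real
inner product space), `A` is the shape operator field, `H` the mean curvature function
(so `trace A = m H`), together with the gradient, Laplace and Hessian operators and the
Ricci curvature of the induced metric, subject to the standard rules of Riemannian
calculus (connectedness of `M` is encoded by `const_of_grad`, and the Bochner formula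
holds).  `mixed p X Y` denotes the ambient curvature term `R^N(X, ξ, Y, ξ)` at `p`,
where `ξ` is the chosen unit normal. -/
structure HypersurfaceData (m : ℕ) (M : Type) (V : Type)
    [NormedAddCommGroup V] [InnerProductSpace ℝ V] [FiniteDimensional ℝ V] : Type where
  dimV : Module.finrank ℝ V = m
  /-- the shape operator -/
  A : M → V →ₗ[ℝ] V
  A_symm : ∀ p (x y : V), ⟪A p x, y⟫ = ⟪x, A p y⟫
  /-- the mean curvature function -/
  H : M → ℝ
  trace_A : ∀ p, LinearMap.trace ℝ V (A p) = m * H p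
  /-- the gradient operator of `(M, g)` -/
  grad : (M → ℝ) → M → V
  /-- the Laplace operator of `(M, g)` -/
  lap : (M → ℝ) → M → ℝ
  /-- `hess2 f` is `|∇df|²`, the squared norm of the Hessian of `f` -/
  hess2 : (M → ℝ) → M → ℝ
  /-- the Ricci curvature of `(M, g)` -/
  ricci : M → V → V → ℝ
  /-- `mixed p X Y = R^N(X, ξ, Y, ξ)` -/
  mixed : M → V → V → ℝ
  grad_add : ∀ f g : M → ℝ, grad (fun p => f p + g p) = fun p => grad f p + grad g p
  grad_mul : ∀ f g : M → ℝ,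
    grad (fun p => f p * g p) = fun p => f p • grad g p + g p • grad f p
  grad_const : ∀ c : ℝ, grad (fun _ => c) = fun _ => 0
  lap_const : ∀ c : ℝ, lap (fun _ => c) = fun _ => 0
  const_of_grad : ∀ f : M → ℝ, (∀ p, grad f p = 0) → ∀ p q, f p = f q
  hess2_nonneg : ∀ f p, 0 ≤ hess2 f p
  hess2_bound : ∀ f p, (lap f p) ^ 2 ≤ m * hess2 f p
  bochner : ∀ (f : M → ℝ) (p : M),
    lap (fun q => ‖grad f q‖ ^ 2) p
      = 2 * (hess2 f p + ricci p (grad f p) (grad f p) + ⟪grad f p, grad (lap f) p⟫)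

namespace HypersurfaceData

variable {m : ℕ} {M V : Type} [NormedAddCommGroup V] [InnerProductSpace ℝ V]
  [FiniteDimensional ℝ V] (D : HypersurfaceData m M V)

/-- `|A|²`, the squared norm of the shape operator. -/
def normA2 (p : M) : ℝ := LinearMap.trace ℝ V (D.A p ∘ₗ D.A p)

/-- The scalar curvature of `M` (trace of the Ricci curvature). -/
def scal (p : M) : ℝ :=
  ∑ i, D.ricci p (stdOrthonormalBasis ℝ V i) (stdOrthonormalBasis ℝ V i)

/-- `M` has constant scalar curvature. -/
def ConstScal : Prop := ∀ p q, D.scal p = D.scal q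

/-- `M` is minimal, i.e. `H ≡ 0`. -/
def Minimal : Prop := ∀ p, D.H p = 0

/-- The biharmonic equations for a hypersurface of an Einstein manifold with
`Ric^N = lam·h` :  `ΔH = H(|A|² - lam)` and `A(∇H) + (m/2) H ∇H = 0`. -/
def IsBiharmonic (lam : ℝ) : Prop :=
  (∀ p, D.lap D.H p = D.H p * (D.normA2 p - lam)) ∧
  (∀ p, D.A p (D.grad D.H p) + ((m : ℝ) / 2 * D.H p) • D.grad D.H p = 0)

/-- The contracted Gauss equation for a hypersurface of a space form of constant
sectional curvature `C`, where `Ric^N(X,Y) = m C ⟨X,Y⟩` and `R^N(X,ξ,Y,ξ) = C ⟨X,Y⟩`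
for tangent `X, Y`. -/
def SpaceFormGauss (C : ℝ) : Prop :=
  ∀ p (X Y : V), (m : ℝ) * C * ⟪X, Y⟫
    = D.ricci p X Y + ⟪D.A p X, D.A p Y⟫ - m * D.H p * ⟪D.A p X, Y⟫ + C * ⟪X, Y⟫

/-- The contracted Gauss equation for a hypersurface of an Einstein manifold with
`Ric^N = lam·h`. -/
def EinsteinAmbientGauss (lam : ℝ) : Prop :=
  ∀ p (X Y : V), lam * ⟪X, Y⟫
    = D.ricci p X Y + ⟪D.A p X, D.A p Y⟫ - m * D.H p * ⟪D.A p X, Y⟫ + D.mixed p X Y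

/-- `Ric^N(ξ,ξ) = lam`: the trace over the tangent directions of `R^N(·,ξ,·,ξ)`
equals the ambient Ricci curvature in the normal direction. -/
def MixedTrace (lam : ℝ) : Prop :=
  ∀ p, ∑ i, D.mixed p (stdOrthonormalBasis ℝ V i) (stdOrthonormalBasis ℝ V i) = lam

end HypersurfaceData


/-- Trace of an endomorphism of a real inner product space via the standard
orthonormal basis. -/
lemma trace_eq_sum_inner_std {V : Type} [NormedAddCommGroup V] [InnerProductSpace ℝ V]
    [FiniteDimensional ℝ V] (T : V →ₗ[ℝ] V) :
    LinearMap.trace ℝ V T = ∑ i, ⟪stdOrthonormalBasis ℝ V i, T (stdOrthonormalBasis ℝ V i)⟫ := by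
  rw [LinearMap.trace_eq_matrix_trace ℝ (stdOrthonormalBasis ℝ V).toBasis, Matrix.trace]
  simp [Matrix.diag, LinearMap.toMatrix_apply, OrthonormalBasis.coe_toBasis_repr_apply,
    OrthonormalBasis.repr_apply_apply, OrthonormalBasis.coe_toBasis]

/-- **Corollary (Chen-type result for Einstein hypersurfaces).**  A biharmonic Einstein
hypersurface (`Ric^M = μ g` for a constant `μ`, `m ≥ 3`) of Euclidean space `ℝ^{m+1}`
(a space form with `C = 0`) or of hyperbolic space `H^{m+1}` (a space form with
`C = −1`) is minimal. -/
theorem biharmonic_einstein_hypersurface_euclidean_hyperbolic_minimal {M V : Type}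
    [NormedAddCommGroup V] [InnerProductSpace ℝ V] [FiniteDimensional ℝ V]
    {m : ℕ} (hm : 3 ≤ m) (D : HypersurfaceData m M V) (C μ : ℝ)
    (hC : C = 0 ∨ C = -1)
    (hgauss : D.SpaceFormGauss C)
    (heinstein : ∀ p (X Y : V), D.ricci p X Y = μ * ⟪X, Y⟫)
    (hbh : D.IsBiharmonic (m * C)) :
    D.Minimal := by
  classical
  intro p₀
  -- abbreviations for the pointwise calculus rules
  have gmul : ∀ (f g : M → ℝ) p,
      D.grad (fun q => f q * g q) p = f p • D.grad g p + g p • D.grad f p :=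
    fun f g p => congrFun (D.grad_mul f g) p
  have gadd : ∀ (f g : M → ℝ) p,
      D.grad (fun q => f q + g q) p = D.grad f p + D.grad g p :=
    fun f g p => congrFun (D.grad_add f g) p
  have gconst : ∀ (c : ℝ) (p : M), D.grad (fun _ => c) p = 0 :=
    fun c p => congrFun (D.grad_const c) p
  have hmpos : (0:ℝ) < (m:ℝ) := by
    have : (3:ℝ) ≤ (m:ℝ) := by exact_mod_cast hm
    linarith
  set c : ℝ := ((m:ℝ) - 1) * C - μ with hc
  set a : ℝ := (3/4) * (m:ℝ)^2 with ha
  have hapos : (0:ℝ) < a := by rw [ha]; positivity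
  set F : M → ℝ := fun p => a * (D.H p * D.H p) + (-c) with hF
  -- Step 1: consequence of Gauss + Einstein
  have gauss : ∀ p (X Y : V),
      ⟪D.A p X, D.A p Y⟫ - (m:ℝ) * D.H p * ⟪D.A p X, Y⟫ = c * ⟪X, Y⟫ := by
    intro p X Y
    have h1 := hgauss p X Y
    rw [heinstein p X Y] at h1
    rw [hc]
    linear_combination -h1
  -- Step 2: the factor kills the gradient in norm
  have key : ∀ p, F p * ⟪D.grad D.H p, D.grad D.H p⟫ = 0 := by
    intro p
    have hA : D.A p (D.grad D.H p) = (-((m:ℝ) / 2 * D.H p)) • D.grad D.H p := by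
      have h := hbh.2 p
      have h' : D.A p (D.grad D.H p) = -(((m:ℝ) / 2 * D.H p) • D.grad D.H p) :=
        eq_neg_of_add_eq_zero_left h
      rw [h', neg_smul]
    have h2 := gauss p (D.grad D.H p) (D.grad D.H p)
    rw [hA] at h2
    simp only [real_inner_smul_left, real_inner_smul_right] at h2
    rw [hF, ha]
    linear_combination h2
  -- Step 3: the factor kills the gradient as a vector
  have hFg : ∀ p, F p • D.grad D.H p = 0 := by
    intro p
    rcases eq_or_ne (F p) 0 with h | h
    · rw [h, zero_smul]
    · have h0 : ⟪D.grad D.H p, D.grad D.H p⟫ = 0 := by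
        have := key p
        exact (mul_eq_zero.mp this).resolve_left h
      have : D.grad D.H p = 0 := inner_self_eq_zero.mp h0
      rw [this, smul_zero]
  -- Step 4: F² has vanishing gradient, hence is constant
  have gF : ∀ p, D.grad F p = (2 * a * D.H p) • D.grad D.H p := by
    intro p
    have h1 : D.grad F p
        = D.grad (fun q => a * (D.H q * D.H q)) p + D.grad (fun _ => -c) p :=
      gadd (fun q => a * (D.H q * D.H q)) (fun _ => -c) p
    have h2 : D.grad (fun q => a * (D.H q * D.H q)) p
        = a • D.grad (fun q => D.H q * D.H q) p + (D.H p * D.H p) • D.grad (fun _ => a) p :=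
      gmul (fun _ => a) (fun q => D.H q * D.H q) p
    rw [h1, h2, gmul D.H D.H p, gconst, gconst, smul_zero, add_zero, add_zero,
      smul_add, smul_smul, ← add_smul]
    congr 1
    ring
  have gψ : ∀ p, D.grad (fun q => F q * F q) p = 0 := by
    intro p
    have h1 : D.grad (fun q => F q * F q) p = F p • D.grad F p + F p • D.grad F p :=
      gmul F F p
    rw [h1, gF p, smul_smul, ← add_smul]
    have h3 : F p * (2 * a * D.H p) + F p * (2 * a * D.H p) = (4 * a * D.H p) * F p := by ring
    rw [h3, mul_smul, hFg p, smul_zero]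
  have hψc : ∀ p q, F p * F p = F q * F q :=
    D.const_of_grad (fun q => F q * F q) gψ
  -- Step 5: the gradient of H vanishes everywhere
  have gradH0 : ∀ p, D.grad D.H p = 0 := by
    intro p
    rcases eq_or_ne (F p) 0 with h0 | h0
    · -- F vanishes everywhere, so H² is constant
      have hFall : ∀ q, F q = 0 := by
        intro q
        have : F q * F q = 0 := by rw [hψc q p, h0, mul_zero]
        exact mul_self_eq_zero.mp this
      have hH2 : ∀ q, D.H q * D.H q = c / a := by
        intro q
        have hq : a * (D.H q * D.H q) + -c = 0 := hFall q
        rw [eq_div_iff (ne_of_gt hapos)]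
        linear_combination hq
      have hgH2 : D.grad (fun q => D.H q * D.H q) p = 0 := by
        have e : (fun q => D.H q * D.H q) = (fun _ => c / a) := funext hH2
        rw [e]; exact gconst _ p
      have h2 : D.H p • D.grad D.H p + D.H p • D.grad D.H p = 0 := by
        rw [← gmul D.H D.H p]; exact hgH2
      rcases eq_or_ne (D.H p) 0 with hH0 | hH0
      · -- then c = 0 and H ≡ 0
        have hc0 : c = 0 := by
          have hp : a * (D.H p * D.H p) + -c = 0 := hFall p
          rw [hH0] at hp
          linear_combination -hp
        have hHall : ∀ q, D.H q = 0 := by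
          intro q
          have hq := hH2 q
          rw [hc0] at hq
          have : D.H q * D.H q = 0 := by rw [hq]; simp
          exact mul_self_eq_zero.mp this
        have e : D.H = (fun _ => (0:ℝ)) := funext hHall
        rw [e]; exact gconst 0 p
      · have h3 : (2 * D.H p) • D.grad D.H p = 0 := by
          rw [two_mul, add_smul]; exact h2
        rcases smul_eq_zero.mp h3 with h4 | h4
        · exact absurd (by linarith [mul_eq_zero.mp h4] : D.H p = 0) hH0
        · exact h4
    · -- F p ≠ 0, so the gradient vanishes at p
      rcases smul_eq_zero.mp (hFg p) with h4 | h4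
      · exact absurd h4 h0
      · exact h4
  -- Step 6: H is constant, so ΔH = 0
  have Hconst : ∀ p q, D.H p = D.H q := D.const_of_grad D.H gradH0
  by_contra hne
  have eH : D.H = fun _ => D.H p₀ := funext fun q => Hconst q p₀
  have lz : D.lap D.H p₀ = 0 := by
    rw [eH]; exact congrFun (D.lap_const (D.H p₀)) p₀
  have heq := hbh.1 p₀
  rw [lz] at heq
  have hnA : D.normA2 p₀ = (m:ℝ) * C := by
    have := (mul_eq_zero.mp heq.symm).resolve_left hne
    linarith
  -- Step 7: trace computations
  set b := stdOrthonormalBasis ℝ V with hb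
  have hnormA2 : D.normA2 p₀ = ∑ i, ⟪D.A p₀ (b i), D.A p₀ (b i)⟫ := by
    rw [HypersurfaceData.normA2, trace_eq_sum_inner_std]
    refine Finset.sum_congr rfl fun i _ => ?_
    rw [LinearMap.comp_apply]
    exact (D.A_symm p₀ (b i) (D.A p₀ (b i))).symm
  have hsum_nonneg : (0:ℝ) ≤ ∑ i, ⟪D.A p₀ (b i), D.A p₀ (b i)⟫ :=
    Finset.sum_nonneg fun i _ => real_inner_self_nonneg
  rcases hC with hC0 | hCm
  · -- Euclidean case: |A|² = 0 forces H = 0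
    have hz : ∑ i, ⟪D.A p₀ (b i), D.A p₀ (b i)⟫ = 0 := by
      rw [← hnormA2, hnA, hC0]; ring
    have hAz : ∀ i ∈ Finset.univ, ⟪D.A p₀ (b i), D.A p₀ (b i)⟫ = (0:ℝ) :=
      (Finset.sum_eq_zero_iff_of_nonneg fun i _ => real_inner_self_nonneg).mp hz
    have htr : (m:ℝ) * D.H p₀ = 0 := by
      rw [← D.trace_A p₀, trace_eq_sum_inner_std]
      refine Finset.sum_eq_zero fun i _ => ?_
      have : D.A p₀ (b i) = 0 := inner_self_eq_zero.mp (hAz i (Finset.mem_univ i))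
      rw [this, inner_zero_right]
    exact hne (by
      rcases mul_eq_zero.mp htr with h | h
      · exact absurd h (ne_of_gt hmpos)
      · exact h)
  · -- Hyperbolic case: |A|² = −m < 0, contradiction
    rw [hnormA2, hCm] at hnA
    nlinarith [hsum_nonneg, hmpos]
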